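/- Let D ∈ ℕ and let O₁', …, O_M' be sets in ℝ³ of the form O_i' = O_i \ W, where the O_i are pairwise disjoint unions of connected components of ℝ³ \ Z(P) for a nonzero polynomial P of degree ≤ D, and W is the ρ-neighborhood of Z(P) for some ρ > 0. If T is a solid cylinder (tube) of radius ρ whose core line ℓ is not contained in Z(P), then T intersects at most D + 1 of the sets O_i'. -/

import Mathlib

open Metric Polynomial
open scoped RealInnerProductSpace

private lemma natDegree_eval2_le {n : ℕ} (P : MvPolynomial (Fin n) ℝ) (g : Fin n → Polynomial ℝ)
    (hg : ∀ i, (g i).natDegree ≤ 1) :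
    (MvPolynomial.eval₂ Polynomial.C g P).natDegree ≤ P.totalDegree := by
  rw [MvPolynomial.eval₂_eq]
  apply Polynomial.natDegree_sum_le_of_forall_le
  intro d hd
  calc (Polynomial.C (MvPolynomial.coeff d P) * ∏ i ∈ d.support, g i ^ d i).natDegree
      ≤ (∏ i ∈ d.support, g i ^ d i).natDegree := Polynomial.natDegree_C_mul_le _ _
    _ ≤ ∑ i ∈ d.support, (g i ^ d i).natDegree := Polynomial.natDegree_prod_le _ _
    _ ≤ ∑ i ∈ d.support, d i := Finset.sum_le_sum (fun i _ =>
        Polynomial.natDegree_pow_le.trans (by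
          have := hg i
          calc d i * (g i).natDegree ≤ d i * 1 := Nat.mul_le_mul_left _ this
            _ = d i := by omega))
    _ = d.sum fun _ e => e := rfl
    _ ≤ P.totalDegree := MvPolynomial.le_totalDegree hd

private lemma proj_min (u v x : EuclideanSpace ℝ (Fin 3)) (hv : v ≠ 0) :
    ∃ t₀ : ℝ, ∀ t : ℝ, dist x (u + t₀ • v) ≤ dist x (u + t • v) := by
  set a := x - u with ha
  have hv2 : (0:ℝ) < ⟪v, v⟫ := by
    rw [real_inner_self_eq_norm_sq]
    exact pow_pos (norm_pos_iff.mpr hv) 2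
  refine ⟨⟪a, v⟫ / ⟪v, v⟫, fun t => ?_⟩
  have key : ∀ s : ℝ, dist x (u + s • v) ^ 2 = ⟪a, a⟫ - 2 * s * ⟪a, v⟫ + s ^ 2 * ⟪v, v⟫ := by
    intro s
    rw [dist_eq_norm]
    have hx : x - (u + s • v) = a - s • v := by rw [ha]; abel
    rw [hx, norm_sub_sq_real, real_inner_smul_right, ← real_inner_self_eq_norm_sq,
      ← real_inner_self_eq_norm_sq, real_inner_smul_right, real_inner_smul_left]
    ring
  have h2 : dist x (u + (⟪a, v⟫ / ⟪v, v⟫) • v) ^ 2 ≤ dist x (u + t • v) ^ 2 := by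
    rw [key, key]
    set t0 : ℝ := ⟪a, v⟫ / ⟪v, v⟫ with ht0
    have e1 : t0 * ⟪v, v⟫ = ⟪a, v⟫ := div_mul_cancel₀ _ hv2.ne'
    have e2 : t0 * ⟪a, v⟫ = t0 ^ 2 * ⟪v, v⟫ := by rw [← e1]; ring
    have e3 : t * ⟪a, v⟫ = t * t0 * ⟪v, v⟫ := by rw [← e1]; ring
    nlinarith [mul_nonneg hv2.le (sq_nonneg (t - t0)), e2, e3]
  nlinarith [dist_nonneg (x := x) (y := u + (⟪a, v⟫ / ⟪v, v⟫) • v),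
    dist_nonneg (x := x) (y := u + t • v)]

/-- a tube of radius `ρ` whose core line is not contained in
`Z(P)` intersects at most `D+1` of the modified cells `O_i' = O_i \ W`, where
`W` is the `ρ`-neighborhood of `Z(P)` and the `O_i` are pairwise disjoint
unions of connected components of `ℝ³ \ Z(P)`, for `P` a nonzero polynomial
of degree at most `D`. -/
theorem stmt_19 (D : ℕ) (P : MvPolynomial (Fin 3) ℝ) (hP : P ≠ 0)
    (hdeg : P.totalDegree ≤ D) (ρ : ℝ) (hρ : 0 < ρ)
    (M : ℕ) (O : Fin M → Set (EuclideanSpace ℝ (Fin 3)))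
    (hdisj : ∀ i j, i ≠ j → Disjoint (O i) (O j))
    (hsub : ∀ i, O i ⊆ {x : EuclideanSpace ℝ (Fin 3) | MvPolynomial.eval x P = 0}ᶜ)
    (hcomp : ∀ i, ∀ x ∈ O i,
      connectedComponentIn {x : EuclideanSpace ℝ (Fin 3) | MvPolynomial.eval x P = 0}ᶜ x ⊆ O i)
    (u v : EuclideanSpace ℝ (Fin 3)) (hv : v ≠ 0)
    (hline : ¬ ({x : EuclideanSpace ℝ (Fin 3) | ∃ t : ℝ, x = u + t • v} ⊆
      {x : EuclideanSpace ℝ (Fin 3) | MvPolynomial.eval x P = 0})) :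
    Nat.card {i : Fin M //
      ((cthickening ρ {x : EuclideanSpace ℝ (Fin 3) | ∃ t : ℝ, x = u + t • v}) ∩
        (O i \ cthickening ρ {x : EuclideanSpace ℝ (Fin 3) | MvPolynomial.eval x P = 0})).Nonempty}
      ≤ D + 1 := by
  classical
  set Z : Set (EuclideanSpace ℝ (Fin 3)) :=
    {x : EuclideanSpace ℝ (Fin 3) | MvPolynomial.eval x P = 0} with hZdef
  set L : Set (EuclideanSpace ℝ (Fin 3)) :=
    {x : EuclideanSpace ℝ (Fin 3) | ∃ t : ℝ, x = u + t • v} with hLdef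
  set q : Polynomial ℝ :=
    MvPolynomial.eval₂ Polynomial.C
      (fun i => Polynomial.C (v i) * Polynomial.X + Polynomial.C (u i)) P with hqdef
  -- evaluation of q
  have hq_eval : ∀ t : ℝ, q.eval t = MvPolynomial.eval (u + t • v) P := by
    intro t
    have h1 := MvPolynomial.eval₂_comp_left (Polynomial.evalRingHom t) Polynomial.C
      (fun i => Polynomial.C (v i) * Polynomial.X + Polynomial.C (u i)) P
    have h2 : (Polynomial.evalRingHom t).comp Polynomial.C = RingHom.id ℝ := by
      ext r; simp
    have h3 : (⇑(Polynomial.evalRingHom t) ∘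
        fun i => Polynomial.C (v i) * Polynomial.X + Polynomial.C (u i))
        = fun i => (u + t • v) i := by
      funext i
      simp [PiLp.add_apply, PiLp.smul_apply, smul_eq_mul]
      ring
    rw [h2, h3] at h1
    exact h1
  -- degree of q
  have hq_deg : q.natDegree ≤ D :=
    le_trans (natDegree_eval2_le P _ (fun i => Polynomial.natDegree_linear_le)) hdeg
  -- q ≠ 0
  obtain ⟨x₀, hx₀L, hx₀Z⟩ := Set.not_subset.mp hline
  obtain ⟨t₀, rfl⟩ := hx₀L
  have hq_ne : q ≠ 0 := by
    intro h
    apply hx₀Z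
    have := hq_eval t₀
    rw [h] at this
    simpa [hZdef] using this.symm
  -- key: each cell meeting the tube (minus W) contains a point of the line
  have key : ∀ i : Fin M, ((cthickening ρ L) ∩ (O i \ cthickening ρ Z)).Nonempty →
      ∃ t : ℝ, u + t • v ∈ O i := by
    rintro i ⟨x, hxT, hxO, hxW⟩
    obtain ⟨s₀, hs₀⟩ := proj_min u v x hv
    set y := u + s₀ • v with hy
    have hxy : dist x y ≤ ρ := by
      have h1 : EMetric.infEdist x L ≤ ENNReal.ofReal ρ := Metric.mem_cthickening_iff.mp hxT
      have h2 : edist x y ≤ EMetric.infEdist x L := by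
        rw [show EMetric.infEdist x L = Metric.infEDist x L from rfl, Metric.le_infEDist]
        rintro z ⟨t, rfl⟩
        rw [edist_dist, edist_dist]
        exact ENNReal.ofReal_le_ofReal (hs₀ t)
      have h3 := le_trans h2 h1
      rw [edist_dist] at h3
      exact (ENNReal.ofReal_le_ofReal_iff hρ.le).mp h3
    have hseg : segment ℝ x y ⊆ Zᶜ := by
      intro z hz
      rw [segment_eq_image] at hz
      obtain ⟨θ, ⟨h0, h1⟩, rfl⟩ := hz
      have hdz : dist x ((1 - θ) • x + θ • y) ≤ dist x y := by
        have hxz : x - ((1 - θ) • x + θ • y) = θ • (x - y) := by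
          rw [smul_sub]; module
        rw [dist_eq_norm, hxz, norm_smul, dist_eq_norm]
        have : ‖θ‖ ≤ 1 := by rw [Real.norm_eq_abs, abs_of_nonneg h0]; exact h1
        calc ‖θ‖ * ‖x - y‖ ≤ 1 * ‖x - y‖ :=
              mul_le_mul_of_nonneg_right this (norm_nonneg _)
          _ = ‖x - y‖ := one_mul _
      intro hzZ
      apply hxW
      rw [Metric.mem_cthickening_iff]
      calc EMetric.infEdist x Z ≤ edist x ((1 - θ) • x + θ • y) :=
            EMetric.infEdist_le_edist_of_mem hzZ
        _ = ENNReal.ofReal (dist x ((1 - θ) • x + θ • y)) := edist_dist _ _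
        _ ≤ ENNReal.ofReal ρ := ENNReal.ofReal_le_ofReal (le_trans hdz hxy)
    have hyO : y ∈ O i :=
      hcomp i x hxO
        (((convex_segment x y).isPreconnected.subset_connectedComponentIn
          (left_mem_segment ℝ x y) hseg) (right_mem_segment ℝ x y))
    exact ⟨s₀, hyO⟩
  -- choose parameters
  set ST := {i : Fin M // ((cthickening ρ L) ∩ (O i \ cthickening ρ Z)).Nonempty} with hSTdef
  have hex : ∀ i : ST, ∃ t : ℝ, u + t • v ∈ O i.1 := fun i => key i.1 i.2
  choose t ht using hex
  have htq : ∀ i : ST, q.eval (t i) ≠ 0 := by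
    intro i h
    exact hsub i.1 (ht i) (by rw [hZdef] at *; exact (hq_eval (t i) ▸ h : _))
  set S : Finset ℝ := q.roots.toFinset with hSdef
  -- injection into WithTop of the roots
  set f : ST → WithTop {r : ℝ // r ∈ S} :=
    fun i => (S.attach.filter (fun r => t i ≤ r.1)).min with hfdef
  -- helper: different cells, ordered parameters
  have helper : ∀ i j : ST, i.1 ≠ j.1 → t i < t j → f i ≠ f j := by
    intro i j hij hlt hfij
    -- no root in [t i, t j]
    have hno : ∀ s ∈ Set.Icc (t i) (t j), q.eval s ≠ 0 := by
      intro s hs hs0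
      have hsS : s ∈ S := by
        rw [hSdef, Multiset.mem_toFinset, Polynomial.mem_roots']
        exact ⟨hq_ne, hs0⟩
      have hstj : s ≠ t j := fun h => htq j (h ▸ hs0)
      have hslt : s < t j := lt_of_le_of_ne hs.2 hstj
      have h1 : f i ≤ ((⟨s, hsS⟩ : {r : ℝ // r ∈ S}) : WithTop {r : ℝ // r ∈ S}) := by
        apply Finset.min_le
        simp only [Finset.mem_filter, Finset.mem_attach, true_and]
        exact hs.1
      rw [hfij] at h1
      by_cases hne : (S.attach.filter (fun r => t j ≤ r.1)).Nonempty
      · have hmin := Finset.coe_min' hne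
        rw [hfdef] at h1
        simp only at h1
        rw [← hmin] at h1
        rw [WithTop.coe_le_coe] at h1
        have hmem := Finset.min'_mem _ hne
        rw [Finset.mem_filter] at hmem
        have : t j ≤ ((S.attach.filter (fun r => t j ≤ r.1)).min' hne).1 := hmem.2
        have hle : ((S.attach.filter (fun r => t j ≤ r.1)).min' hne).1 ≤ s := h1
        linarith
      · rw [Finset.not_nonempty_iff_eq_empty] at hne
        rw [hfdef] at h1
        simp only at h1
        rw [hne] at h1
        simp at h1
    -- the two line points are connected within Zᶜ
    set xi := u + t i • v with hxi
    set xj := u + t j • v with hxj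
    have hseg : segment ℝ xi xj ⊆ Zᶜ := by
      intro z hz
      rw [segment_eq_image] at hz
      obtain ⟨θ, ⟨h0, h1⟩, rfl⟩ := hz
      show (1 - θ) • xi + θ • xj ∈ Zᶜ
      have hz2 : (1 - θ) • xi + θ • xj = u + ((1 - θ) * t i + θ * t j) • v := by
        rw [hxi, hxj]; module
      rw [hz2]
      have hsIcc : (1 - θ) * t i + θ * t j ∈ Set.Icc (t i) (t j) := by
        constructor <;> nlinarith
      have := hno _ hsIcc
      rw [hq_eval] at this
      simpa [hZdef] using this
    have hxiO : xi ∈ O i.1 := ht i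
    have hxjO : xj ∈ O j.1 := ht j
    have hxjOi : xj ∈ O i.1 :=
      hcomp i.1 xi hxiO
        (((convex_segment xi xj).isPreconnected.subset_connectedComponentIn
          (left_mem_segment ℝ xi xj) hseg) (right_mem_segment ℝ xi xj))
    exact Set.disjoint_left.mp (hdisj i.1 j.1 hij) hxjOi hxjO
  -- f is injective
  have hinj : Function.Injective f := by
    intro i j hfij
    by_contra hne
    have hij : i.1 ≠ j.1 := fun h => hne (Subtype.ext h)
    rcases lt_trichotomy (t i) (t j) with h | h | h
    · exact helper i j hij h hfij
    · have : u + t i • v ∈ O i.1 := ht i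
      have h2 : u + t i • v ∈ O j.1 := by rw [h]; exact ht j
      exact Set.disjoint_left.mp (hdisj i.1 j.1 hij) this h2
    · exact helper j i (Ne.symm hij) h hfij.symm
  -- count
  haveI : Fintype (WithTop {r : ℝ // r ∈ S}) := inferInstanceAs (Fintype (Option _))
  have hcard1 : Nat.card ST ≤ Nat.card (WithTop {r : ℝ // r ∈ S}) :=
    Nat.card_le_card_of_injective f hinj
  have hcard2 : Nat.card (WithTop {r : ℝ // r ∈ S}) = S.card + 1 := by
    rw [show Nat.card (WithTop {r : ℝ // r ∈ S}) = Nat.card (Option {r : ℝ // r ∈ S}) from rfl,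
      Nat.card_eq_fintype_card, Fintype.card_option, Fintype.card_coe]
  have hcard3 : S.card ≤ D := by
    calc S.card ≤ Multiset.card q.roots := Multiset.toFinset_card_le _
      _ ≤ q.natDegree := Polynomial.card_roots' q
      _ ≤ D := hq_deg
  calc Nat.card ST ≤ S.card + 1 := hcard2 ▸ hcard1
    _ ≤ D + 1 := by omega
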